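/- Let d ≥ 1 be an integer, let 0 < α_1 < α_2 < ⋯ < α_d < π be real numbers, and let c_1, c_2, …, c_d be real numbers. If c_1 sin(n α_1) + c_2 sin(n α_2) + ⋯ + c_d sin(n α_d) = 0 holds for every n = 1, 2, …, d, then c_1 = c_2 = ⋯ = c_d = 0. -/

import Mathlib

open Polynomial Polynomial.Chebyshev

/-- The `n`-th Chebyshev polynomial of the second kind has `n`-th coefficient `2^n`
and natural degree at most `n`. -/
lemma U_coeff_natDegree : ∀ n : ℕ, ((U ℝ n).coeff n = 2 ^ n) ∧ (U ℝ n).natDegree ≤ n := by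
  intro n
  induction n using Nat.strong_induction_on with
  | _ n ih =>
    match n with
    | 0 => simp [U_zero]
    | 1 =>
      constructor
      · simp [U_one]
      · simpa using natDegree_mul_le (p := (2 : ℝ[X])) (q := X) |>.trans (by simp)
    | (k + 2) =>
      obtain ⟨hc1, hd1⟩ := ih (k + 1) (by omega)
      obtain ⟨hc0, hd0⟩ := ih k (by omega)
      have hU : U ℝ ((k : ℤ) + 2) = 2 * X * U ℝ ((k : ℤ) + 1) - U ℝ (k : ℤ) :=
        U_add_two ℝ k
      have hcast : ((k + 2 : ℕ) : ℤ) = (k : ℤ) + 2 := by push_cast; ring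
      have hcast1 : ((k + 1 : ℕ) : ℤ) = (k : ℤ) + 1 := by push_cast; ring
      rw [hcast, hU]
      constructor
      · have h2 : (2 * X * U ℝ ((k : ℤ) + 1)).coeff (k + 2) = 2 * 2 ^ (k + 1) := by
          rw [mul_assoc, (map_ofNat Polynomial.C 2).symm, coeff_C_mul, coeff_X_mul]
          rw [← hcast1, hc1]
        have h0 : (U ℝ (k : ℤ)).coeff (k + 2) = 0 :=
          coeff_eq_zero_of_natDegree_lt (by omega)
        rw [coeff_sub, h2, h0]
        ring
      · refine (natDegree_sub_le _ _).trans ?_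
        have hX : (2 * X * U ℝ ((k : ℤ) + 1)).natDegree ≤ k + 2 := by
          refine (natDegree_mul_le).trans ?_
          have : (2 * X : ℝ[X]).natDegree ≤ 1 :=
            (natDegree_mul_le).trans (by simp)
          rw [← hcast1] at *
          omega
        simp only [max_le_iff]
        exact ⟨hX, by omega⟩

/-- Auxiliary: the normalized Chebyshev polynomial is monic of degree `n`. -/
lemma normU_monic (n : ℕ) :
    ((C ((2 : ℝ) ^ n)⁻¹ * U ℝ n).natDegree = n) ∧ (C ((2 : ℝ) ^ n)⁻¹ * U ℝ n).Monic := by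
  obtain ⟨hc, hdle⟩ := U_coeff_natDegree n
  have h2 : ((2 : ℝ) ^ n)⁻¹ ≠ 0 := by positivity
  have hne : (U ℝ n).coeff n ≠ 0 := by rw [hc]; positivity
  have hdeg : (U ℝ n).natDegree = n :=
    le_antisymm hdle (le_natDegree_of_ne_zero hne)
  have hDeg : (C ((2 : ℝ) ^ n)⁻¹ * U ℝ n).natDegree = n := by
    rw [natDegree_C_mul h2, hdeg]
  refine ⟨hDeg, ?_⟩
  unfold Monic leadingCoeff
  rw [hDeg, coeff_C_mul, hc]
  field_simp

/- Linear independence of the vectors `(sin(n αᵢ))ₙ`: if a linear combination of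
`sin(n α₁), …, sin(n α_d)` vanishes for `n = 1, …, d`, all coefficients vanish. -/
theorem sin_vectors_linear_independent
    (d : ℕ) (hd : 1 ≤ d)
    (α : Fin d → ℝ) (hα_mono : StrictMono α)
    (hα_pos : ∀ i, 0 < α i) (hα_lt : ∀ i, α i < Real.pi)
    (c : Fin d → ℝ)
    (h : ∀ n : ℕ, 1 ≤ n → n ≤ d → ∑ i, c i * Real.sin (n * α i) = 0) :
    ∀ i, c i = 0 := by
  -- the normalized Chebyshev polynomials
  set p : Fin d → ℝ[X] := fun i => C ((2 : ℝ) ^ (i : ℕ))⁻¹ * U ℝ (i : ℕ) with hp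
  -- sin α j ≠ 0
  have hsin : ∀ j, Real.sin (α j) ≠ 0 := fun j =>
    ne_of_gt (Real.sin_pos_of_pos_of_lt_pi (hα_pos j) (hα_lt j))
  -- cos ∘ α is injective
  have hcos_inj : Function.Injective (fun j => Real.cos (α j)) := by
    intro a b hab
    by_contra hne
    have := Real.injOn_cos
      ⟨le_of_lt (hα_pos a), le_of_lt (hα_lt a)⟩
      ⟨le_of_lt (hα_pos b), le_of_lt (hα_lt b)⟩ hab
    exact hne (hα_mono.injective this)
  -- the matrix
  set M : Matrix (Fin d) (Fin d) ℝ :=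
    Matrix.of (fun i j => (p i).eval (Real.cos (α j))) with hM
  have hdet : M.det ≠ 0 := by
    have hMt : M = Matrix.transpose (Matrix.of (fun i j => (p j).eval (Real.cos (α i)))) := rfl
    rw [hMt, Matrix.det_transpose,
      ← Matrix.det_eval_matrixOfPolynomials_eq_det_vandermonde
        (fun j => Real.cos (α j)) p (fun i => (normU_monic i).1) (fun i => (normU_monic i).2)]
    exact Matrix.det_vandermonde_ne_zero_iff.mpr hcos_inj
  set w : Fin d → ℝ := fun j => c j * Real.sin (α j) with hw
  have hmv : M.mulVec w = 0 := by
    funext i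
    have hi := h (i + 1) (by omega) (by omega)
    have key : ∀ j, Real.sin (((i : ℕ) + 1 : ℕ) * α j)
        = (U ℝ (i : ℕ)).eval (Real.cos (α j)) * Real.sin (α j) := by
      intro j
      rw [Polynomial.Chebyshev.U_real_cos (α j) (i : ℕ)]
      push_cast
      ring_nf
    simp only [key] at hi
    show (∑ j, M i j * w j) = 0
    have : ∀ j, M i j * w j
        = ((2 : ℝ) ^ (i : ℕ))⁻¹ * (c j * ((U ℝ (i : ℕ)).eval (Real.cos (α j)) * Real.sin (α j))) := by
      intro j
      simp only [hM, hw, hp, Matrix.of_apply, eval_mul, eval_C]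
      ring
    rw [Finset.sum_congr rfl (fun j _ => this j), ← Finset.mul_sum, hi, mul_zero]
  have hw0 : w = 0 := Matrix.eq_zero_of_mulVec_eq_zero hdet hmv
  intro i
  have := congrFun hw0 i
  simp only [hw, Pi.zero_apply] at this
  exact (mul_eq_zero.mp this).resolve_right (hsin i)
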